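/- For all integers m ≥ j ≥ r ≥ 0 with m > r, ∑_{k=j}^{m} C(m,k) C(k,r) (-1)^k = C(m,j) C(j,r) · (j-r)/(m-r) · (-1)^j. -/

import Mathlib

theorem stmt2 (m j r : ℕ) (hrj : r ≤ j) (hjm : j ≤ m) (hrm : r < m) :
    ∑ k ∈ Finset.Icc j m, (m.choose k : ℚ) * (k.choose r : ℚ) * (-1 : ℚ) ^ k =
      (m.choose j : ℚ) * (j.choose r : ℚ) * (((j : ℚ) - r) / ((m : ℚ) - r)) * (-1 : ℚ) ^ j := by
  have hm0 : ((m : ℚ) - r) ≠ 0 := by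
    have : (r : ℚ) < m := by exact_mod_cast hrm
    linarith
  obtain ⟨d, hd⟩ : ∃ d, m = j + d := ⟨m - j, (Nat.add_sub_cancel' hjm).symm⟩
  induction d generalizing j with
  | zero =>
    have hjm2 : j = m := by omega
    subst hjm2
    rw [Finset.Icc_self, Finset.sum_singleton, Nat.choose_self, div_self hm0]
    push_cast
    ring
  | succ d ih =>
    have hjm' : j + 1 ≤ m := by omega
    rw [Finset.Icc_eq_cons_Ioc hjm, Finset.sum_cons, ← Finset.Icc_add_one_left_eq_Ioc,
      ih (j+1) (le_of_lt (Nat.lt_succ_of_le hrj)) hjm' (by omega)]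
    -- key binomial identity
    have h1 : ((m.choose (j+1) : ℚ)) * ((j:ℚ)+1) = (m.choose j : ℚ) * ((m:ℚ) - j) := by
      have := Nat.choose_succ_right_eq m j
      have hc : ((m - j : ℕ) : ℚ) = (m:ℚ) - j := by
        rw [Nat.cast_sub hjm]
      calc ((m.choose (j+1) : ℚ)) * ((j:ℚ)+1)
          = ((m.choose (j+1) * (j+1) : ℕ) : ℚ) := by push_cast; ring
        _ = ((m.choose j * (m - j) : ℕ) : ℚ) := by rw [this]
        _ = (m.choose j : ℚ) * ((m:ℚ) - j) := by push_cast [Nat.cast_sub hjm]; ring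
    have h2 : ((j.choose r : ℚ)) * ((j:ℚ)+1) = ((j+1).choose r : ℚ) * ((j:ℚ)+1-r) := by
      have := Nat.choose_mul_succ_eq j r
      calc ((j.choose r : ℚ)) * ((j:ℚ)+1)
          = ((j.choose r * (j+1) : ℕ) : ℚ) := by push_cast; ring
        _ = (((j+1).choose r * (j + 1 - r) : ℕ) : ℚ) := by rw [this]
        _ = ((j+1).choose r : ℚ) * ((j:ℚ)+1-r) := by
            push_cast [Nat.cast_sub (by omega : r ≤ j + 1)]; ring
    have key : (m.choose j : ℚ) * (j.choose r : ℚ) * ((m:ℚ) - j) =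
        (m.choose (j+1) : ℚ) * ((j+1).choose r : ℚ) * ((j:ℚ)+1-r) := by
      linear_combination (m.choose (j+1) : ℚ) * h2 - (j.choose r : ℚ) * h1
    field_simp
    push_cast
    linear_combination ((-1:ℚ)^j) * key
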